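/- Let V ∈ U(d), N ≥ 1, let λ₁, λ_d be eigenvalues of V with corresponding orthogonal spectral projectors P₁, P_d, and let ρ₁, ρ_d ∈ 𝒟(ℂ^d) satisfy ρ₁ = P₁ρ₁P₁, ρ_d = P_dρ_dP_d and diag(ρ₁) = diag(ρ_d). Suppose there is a probability vector (p₁, p₂, p₃) with p₁λ₁^N + p₂λ₁λ_d^{N−1} + p₃λ_d^N = 0. Then ρ = p₁ρ₁^{⊗N} + p₂(ρ₁ ⊗ ρ_d^{⊗(N−1)}) + p₃ρ_d^{⊗N} is a density matrix on (ℂ^d)^{⊗N} satisfying diag(ρ·V^{⊗N}) = 0; consequently ‖𝒫_{V^{⊗N}} − 𝒫_𝟙‖_◇ = 2, i.e., N parallel queries allow perfect discrimination of 𝒫_V from the standard-basis measurement. -/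

import Mathlib

open Matrix MeasureTheory
open scoped ENNReal ComplexOrder

noncomputable section

namespace Paper

/-- Trace norm `‖X‖₁ = Tr √(Xᴴ X)`. -/
noncomputable def traceNorm {n : Type*} [Fintype n] [DecidableEq n] (X : Matrix n n ℂ) : ℝ :=
  (((Matrix.posSemidef_conjTranspose_mul_self X).1.eigenvectorUnitary : Matrix n n ℂ) *
    Matrix.diagonal (((↑) : ℝ → ℂ) ∘ Real.sqrt ∘ (Matrix.posSemidef_conjTranspose_mul_self X).1.eigenvalues) *
    (star (Matrix.posSemidef_conjTranspose_mul_self X).1.eigenvectorUnitary : Matrix n n ℂ)).trace.re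

/-- `(S ⊗ id)(X)`, the map `S` applied to the first tensor factor. -/
def tensorApplyLeft {n n' m : Type*} [Fintype n] [Fintype m]
    (S : Matrix n n ℂ →ₗ[ℂ] Matrix n' n' ℂ)
    (X : Matrix (n × m) (n × m) ℂ) : Matrix (n' × m) (n' × m) ℂ :=
  Matrix.of fun p q => S (Matrix.of fun i j => X (i, p.2) (j, q.2)) p.1 q.1

/-- Diamond norm of a linear map between matrix spaces. -/
noncomputable def diamondNorm {n n' : Type*} [Fintype n] [DecidableEq n] [Fintype n']
    [DecidableEq n'] (S : Matrix n n ℂ →ₗ[ℂ] Matrix n' n' ℂ) : ℝ :=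
  sSup { t : ℝ | ∃ (k : ℕ) (X : Matrix (n × Fin (k + 1)) (n × Fin (k + 1)) ℂ),
    traceNorm X = 1 ∧ t = traceNorm (tensorApplyLeft S X) }

/-- The completely dephasing channel in the standard basis. -/
def dephaseMap (n : Type*) [Fintype n] [DecidableEq n] :
    Matrix n n ℂ →ₗ[ℂ] Matrix n n ℂ where
  toFun X := Matrix.diagonal fun i => X i i
  map_add' X Y := by
    ext i j
    by_cases h : i = j <;> simp [Matrix.diagonal_apply, h]
  map_smul' c X := by
    ext i j
    by_cases h : i = j <;> simp [Matrix.diagonal_apply, h]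

/-- The unitary channel `Φ_U(X) = U X Uᴴ`. -/
def unitaryChannel {n : Type*} [Fintype n] (U : Matrix n n ℂ) :
    Matrix n n ℂ →ₗ[ℂ] Matrix n n ℂ where
  toFun X := U * X * Uᴴ
  map_add' X Y := by simp [Matrix.mul_add, Matrix.add_mul]
  map_smul' c X := by simp [mul_smul_comm, smul_mul_assoc]

/-- The von Neumann measurement channel `𝒫_U(σ) = Σ_i ⟨i|U† σ U|i⟩ |i⟩⟨i| = diag(U† σ U)`. -/
def measChannel {n : Type*} [Fintype n] [DecidableEq n] (U : Matrix n n ℂ) :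
    Matrix n n ℂ →ₗ[ℂ] Matrix n n ℂ :=
  (dephaseMap n).comp (unitaryChannel Uᴴ)

/-- `N`-fold tensor (Kronecker) power of a matrix. -/
def tensorPow {d : ℕ} (U : Matrix (Fin d) (Fin d) ℂ) (N : ℕ) :
    Matrix (Fin N → Fin d) (Fin N → Fin d) ℂ :=
  Matrix.of fun f g => ∏ k, U (f k) (g k)

/-- Tensor product of a family of `d × d` matrices. -/
def tensorFamily {d N : ℕ} (ρ : Fin N → Matrix (Fin d) (Fin d) ℂ) :
    Matrix (Fin N → Fin d) (Fin N → Fin d) ℂ :=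
  Matrix.of fun f g => ∏ k, (ρ k) (f k) (g k)

/-- Density matrices. -/
def IsDensityMatrix {n : Type*} [Fintype n] (ρ : Matrix n n ℂ) : Prop :=
  ρ.PosSemidef ∧ ρ.trace = 1

/-- The set of diagonal unitary matrices `𝒟𝒰`. -/
def diagUnitary (n : Type*) [Fintype n] [DecidableEq n] : Set (Matrix n n ℂ) :=
  { E | E ∈ Matrix.unitaryGroup n ℂ ∧ E.IsDiag }

/-- `Θ(U)`: the angle of the shortest arc of the unit circle containing all eigenvalues. -/
noncomputable def thetaArc {n : Type*} [Fintype n] [DecidableEq n] (U : Matrix n n ℂ) : ℝ :=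
  sInf { t : ℝ | 0 ≤ t ∧ ∃ α : ℝ, ∀ lam ∈ spectrum ℂ U, ∃ s : ℝ, 0 ≤ s ∧ s ≤ t ∧
    lam = Complex.exp (Complex.I * (↑α + ↑s)) }

/-- `Υ(U) = min_{E ∈ 𝒟𝒰} Θ(UE)`. -/
noncomputable def upsilonArc {n : Type*} [Fintype n] [DecidableEq n] (U : Matrix n n ℂ) : ℝ :=
  sInf { t : ℝ | ∃ E ∈ diagUnitary n, t = thetaArc (U * E) }

/-- Numerical range `W(A)`. -/
def numericalRange {n : Type*} [Fintype n] (A : Matrix n n ℂ) : Set ℂ :=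
  { z | ∃ x : n → ℂ, (∑ i, ‖x i‖ ^ 2) = 1 ∧ z = star x ⬝ᵥ A.mulVec x }

/-- minimal modulus over the numerical range -/
noncomputable def nuMin {n : Type*} [Fintype n] (A : Matrix n n ℂ) : ℝ :=
  sInf { r : ℝ | ∃ z ∈ numericalRange A, r = ‖z‖ }

/-- Operator (spectral) norm of a matrix. -/
noncomputable def opNorm {n : Type*} [Fintype n] [DecidableEq n] (A : Matrix n n ℂ) : ℝ :=
  ‖Matrix.toEuclideanCLM (𝕜 := ℂ) A‖

/-- Matrix of the orthogonal projection onto a subspace of `EuclideanSpace ℂ n`. -/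
noncomputable def projMatrix {n : Type*} [Fintype n] [DecidableEq n]
    (K : Submodule ℂ (EuclideanSpace ℂ n)) : Matrix n n ℂ :=
  Matrix.toEuclideanLin.symm (K.subtype ∘ₗ K.orthogonalProjectionOnto.toLinearMap)

/-- Matrix of the orthogonal projection onto the eigenspace of `A` for eigenvalue `lam`. -/
noncomputable def eigProj {n : Type*} [Fintype n] [DecidableEq n] (A : Matrix n n ℂ) (lam : ℂ) :
    Matrix n n ℂ :=
  projMatrix (Module.End.eigenspace (Matrix.toEuclideanLin A) lam)

end Paper

namespace Paper

/-- Optimal unambiguous discrimination probability of `𝒫_𝟙` vs `𝒫_U` without entanglement. -/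
noncomputable def puNoEnt {n : Type*} [Fintype n] [DecidableEq n] (U : Matrix n n ℂ) : ℝ :=
  sSup { t : ℝ | ∃ σ M₁ M₂ M₃ : Matrix n n ℂ,
    IsDensityMatrix σ ∧ M₁.PosSemidef ∧ M₂.PosSemidef ∧ M₃.PosSemidef ∧ M₁ + M₂ + M₃ = 1 ∧
    (M₂ * measChannel (1 : Matrix n n ℂ) σ).trace = 0 ∧
    (M₁ * measChannel U σ).trace = 0 ∧
    t = (1 / 2) * (((M₁ * measChannel (1 : Matrix n n ℂ) σ).trace).re +
                   ((M₂ * measChannel U σ).trace).re) }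

/-- Optimal entanglement-assisted unambiguous discrimination probability of `𝒫_𝟙` vs `𝒫_U`. -/
noncomputable def puEnt {n : Type*} [Fintype n] [DecidableEq n] (U : Matrix n n ℂ) : ℝ :=
  sSup { t : ℝ | ∃ (k : ℕ) (σ M₁ M₂ M₃ : Matrix (n × Fin (k + 1)) (n × Fin (k + 1)) ℂ),
    IsDensityMatrix σ ∧ M₁.PosSemidef ∧ M₂.PosSemidef ∧ M₃.PosSemidef ∧ M₁ + M₂ + M₃ = 1 ∧
    (M₂ * tensorApplyLeft (measChannel (1 : Matrix n n ℂ)) σ).trace = 0 ∧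
    (M₁ * tensorApplyLeft (measChannel U) σ).trace = 0 ∧
    t = (1 / 2) * (((M₁ * tensorApplyLeft (measChannel (1 : Matrix n n ℂ)) σ).trace).re +
                   ((M₂ * tensorApplyLeft (measChannel U) σ).trace).re) }

/-- `Π_A = Σ_{i ∈ A} |i⟩⟨i|`. -/
noncomputable def basisProj {n : Type*} [Fintype n] [DecidableEq n] (A : Finset n) :
    Matrix n n ℂ :=
  ∑ i ∈ A, Matrix.single i i (1 : ℂ)

/-- `ℙ_{Γ,Δ}`: projector onto `span{U|i⟩ : i ∈ Γᶜ} ∩ span{|j⟩ : j ∈ Δᶜ}`. -/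
noncomputable def PGD {n : Type*} [Fintype n] [DecidableEq n] (U : Matrix n n ℂ)
    (Γ Δ : Finset n) : Matrix n n ℂ :=
  projMatrix
    ((Submodule.span ℂ { v : EuclideanSpace ℂ n |
        ∃ i ∉ Γ, v = (WithLp.equiv 2 (n → ℂ)).symm (fun r => U r i) }) ⊓
     (Submodule.span ℂ { v : EuclideanSpace ℂ n |
        ∃ j ∉ Δ, v = (WithLp.equiv 2 (n → ℂ)).symm (Pi.single j 1) }))

/-- `W` acting on the `k`-th of `N` registers (identity elsewhere). -/
def actOn {d : ℕ} (N : ℕ) (W : Matrix (Fin d) (Fin d) ℂ) (k : ℕ) :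
    Matrix (Fin N → Fin d) (Fin N → Fin d) ℂ :=
  Matrix.of fun f g => ∏ j : Fin N,
    if (j : ℕ) = k then W (f j) (g j) else (if f j = g j then (1 : ℂ) else 0)

/-- A system operator extended by identity on the ancilla. -/
def sysOp {d N m : ℕ} (A : Matrix (Fin N → Fin d) (Fin N → Fin d) ℂ) :
    Matrix ((Fin N → Fin d) × Fin m) ((Fin N → Fin d) × Fin m) ℂ :=
  Matrix.of fun p q => A p.1 q.1 * (if p.2 = q.2 then (1 : ℂ) else 0)

/-- `C` is classically controlled on the first `k` registers, i.e. of the form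
`Σ_{i₁,…,i_k} |i₁…i_k⟩⟨i₁…i_k| ⊗ V_{i₁…i_k}`. -/
def ControlledOnFirst {d N m : ℕ} (k : ℕ)
    (C : Matrix ((Fin N → Fin d) × Fin m) ((Fin N → Fin d) × Fin m) ℂ) : Prop :=
  ∀ p q, (∃ j : Fin N, (j : ℕ) < k ∧ p.1 j ≠ q.1 j) → C p q = 0

/-- The sequential-scheme unitary
`A_W = (𝟙⊗…⊗W⊗𝟙ₘ)·C_{N-1}·…·C₁·(W⊗𝟙⊗…⊗𝟙ₘ)`. -/
noncomputable def seqUnitary {d N m : ℕ} (W : Matrix (Fin d) (Fin d) ℂ)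
    (C : ℕ → Matrix ((Fin N → Fin d) × Fin m) ((Fin N → Fin d) × Fin m) ℂ) :
    Matrix ((Fin N → Fin d) × Fin m) ((Fin N → Fin d) × Fin m) ℂ :=
  (((List.range (N - 1)).reverse.map fun j =>
      sysOp (actOn N W (j + 1)) * C (j + 1)).prod) * sysOp (actOn N W 0)

/-- Dephasing in the standard product basis on the first `N` registers only. -/
def dephaseFirst (d N m : ℕ) :
    Matrix ((Fin N → Fin d) × Fin m) ((Fin N → Fin d) × Fin m) ℂ →ₗ[ℂ]
    Matrix ((Fin N → Fin d) × Fin m) ((Fin N → Fin d) × Fin m) ℂ where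
  toFun X := Matrix.of fun p q => if p.1 = q.1 then X p q else 0
  map_add' X Y := by
    ext p q
    by_cases h : p.1 = q.1 <;> simp [h]
  map_smul' c X := by
    ext p q
    by_cases h : p.1 = q.1 <;> simp [h]

/-- The Hadamard matrix. -/
noncomputable def Hmat : Matrix (Fin 2) (Fin 2) ℂ :=
  (((1 : ℝ) / Real.sqrt 2 : ℝ) : ℂ) • !![1, 1; 1, -1]

/-- `ψ = (|1⟩⊗|1⟩ − |2⟩⊗|2⟩)/√2`. -/
noncomputable def psiVec : Fin 2 × Fin 2 → ℂ := fun p =>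
  if p = (0, 0) then (((1 : ℝ) / Real.sqrt 2 : ℝ) : ℂ)
  else if p = (1, 1) then -(((1 : ℝ) / Real.sqrt 2 : ℝ) : ℂ) else 0

/-- `ρ = |ψ⟩⟨ψ|`. -/
noncomputable def rhoPsi : Matrix (Fin 2 × Fin 2) (Fin 2 × Fin 2) ℂ :=
  Matrix.of fun p q => psiVec p * (starRingEnd ℂ) (psiVec q)

end Paper

namespace Paper

/-! auxiliary machinery -/

noncomputable def _root_.Matrix.PosSemidef.sqrt {n : Type*} [Fintype n] [DecidableEq n]
    {A : Matrix n n ℂ} (hA : A.PosSemidef) : Matrix n n ℂ :=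
  (hA.1.eigenvectorUnitary : Matrix n n ℂ) *
    Matrix.diagonal (((↑) : ℝ → ℂ) ∘ Real.sqrt ∘ hA.1.eigenvalues) *
    (star hA.1.eigenvectorUnitary : Matrix n n ℂ)

open scoped MatrixOrder in
lemma _root_.Matrix.PosSemidef.sqrt_eq_cfcSqrt {n : Type*} [Fintype n] [DecidableEq n]
    {A : Matrix n n ℂ} (hA : A.PosSemidef) : hA.sqrt = CFC.sqrt A := by
  rw [CFC.sqrt_eq_cfc, cfc_nnreal_eq_real _ A hA.nonneg, hA.1.cfc_eq]
  simp only [IsHermitian.cfc, Unitary.conjStarAlgAut_apply, Matrix.PosSemidef.sqrt]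
  congr 3
  funext i
  simp [Real.coe_sqrt, Real.coe_toNNReal', max_eq_left (hA.eigenvalues_nonneg i)]

open scoped MatrixOrder in
lemma _root_.Matrix.PosSemidef.posSemidef_sqrt {n : Type*} [Fintype n] [DecidableEq n]
    {A : Matrix n n ℂ} (hA : A.PosSemidef) : hA.sqrt.PosSemidef := by
  rw [hA.sqrt_eq_cfcSqrt]
  exact (CFC.sqrt_nonneg A).posSemidef

open scoped MatrixOrder in
lemma _root_.Matrix.PosSemidef.sqrt_mul_self {n : Type*} [Fintype n] [DecidableEq n]
    {A : Matrix n n ℂ} (hA : A.PosSemidef) : hA.sqrt * hA.sqrt = A := by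
  rw [hA.sqrt_eq_cfcSqrt]
  exact CFC.sqrt_mul_sqrt_self A hA.nonneg

open scoped MatrixOrder in
lemma _root_.Matrix.PosSemidef.eq_sqrt_of_sq_eq {n : Type*} [Fintype n] [DecidableEq n]
    {A : Matrix n n ℂ} (hA : A.PosSemidef) (B : Matrix n n ℂ) {hB : B.PosSemidef}
    (h : A ^ 2 = B) : A = hB.sqrt := by
  rw [hB.sqrt_eq_cfcSqrt]
  exact (CFC.sqrt_unique (by rw [← h, sq]) hA.nonneg).symm

lemma traceNorm_def {n : Type*} [Fintype n] [DecidableEq n] (X : Matrix n n ℂ) :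
    traceNorm X = ((Matrix.posSemidef_conjTranspose_mul_self X).sqrt.trace).re := rfl

/-! ### vector lemmas -/

noncomputable def nsq {n : Type*} [Fintype n] (x : n → ℂ) : ℝ := ∑ i, Complex.normSq (x i)

lemma nsq_nonneg {n : Type*} [Fintype n] (x : n → ℂ) : 0 ≤ nsq x :=
  Finset.sum_nonneg fun _ _ => Complex.normSq_nonneg _

lemma star_dot_self {n : Type*} [Fintype n] (x : n → ℂ) : star x ⬝ᵥ x = (nsq x : ℂ) := by
  simp only [dotProduct, nsq, Pi.star_apply, Complex.ofReal_sum]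
  exact Finset.sum_congr rfl fun i _ => (Complex.normSq_eq_conj_mul_self).symm ▸ rfl

lemma abs_star_dot_le {n : Type*} [Fintype n] (x y : n → ℂ) :
    ‖star x ⬝ᵥ y‖ ≤ Real.sqrt (nsq x) * Real.sqrt (nsq y) := by
  have hn : ∀ z : n → ℂ, ‖(WithLp.equiv 2 (n → ℂ)).symm z‖ = Real.sqrt (nsq z) := by
    intro z
    rw [EuclideanSpace.norm_eq]
    congr 1
    refine Finset.sum_congr rfl fun i _ => ?_
    rw [WithLp.equiv_symm_apply, PiLp.toLp_apply]
    rw [← Complex.sq_norm]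
  have h := norm_inner_le_norm (𝕜 := ℂ)
      ((WithLp.equiv 2 (n → ℂ)).symm x) ((WithLp.equiv 2 (n → ℂ)).symm y)
  rw [hn, hn] at h
  have hi : (inner ℂ ((WithLp.equiv 2 (n → ℂ)).symm x) ((WithLp.equiv 2 (n → ℂ)).symm y) : ℂ)
      = star x ⬝ᵥ y := by
    simp [PiLp.inner_apply, dotProduct, RCLike.inner_apply, mul_comm]
  rw [hi] at h
  exact h

/-! ### contractions -/

def Contr {n m : Type*} [Fintype n] [Fintype m] (W : Matrix m n ℂ) : Prop :=
  ∀ x : n → ℂ, nsq (W *ᵥ x) ≤ nsq x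

variable {n m : Type*} [Fintype n] [Fintype m]

lemma dot_mulVec_eq (W : Matrix m n ℂ) (x : m → ℂ) (y : n → ℂ) :
    star x ⬝ᵥ (W *ᵥ y) = star (Wᴴ *ᵥ x) ⬝ᵥ y := by
  rw [star_mulVec, conjTranspose_conjTranspose, dotProduct_mulVec]

lemma star_dot_mulVec_self (W : Matrix m n ℂ) (x : n → ℂ) :
    star x ⬝ᵥ ((Wᴴ * W) *ᵥ x) = (nsq (W *ᵥ x) : ℂ) := by
  rw [← mulVec_mulVec, dot_mulVec_eq, conjTranspose_conjTranspose, star_dot_self]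

lemma contr_of_psd [DecidableEq n] {W : Matrix n n ℂ} (h : (1 - Wᴴ * W).PosSemidef) : Contr W := by
  intro x
  have h2 := h.dotProduct_mulVec_nonneg x
  rw [sub_mulVec, one_mulVec, dotProduct_sub, star_dot_self, star_dot_mulVec_self] at h2
  rw [← Complex.ofReal_sub] at h2
  rw [Complex.zero_le_real] at h2
  linarith

lemma psd_of_contr [DecidableEq n] {W : Matrix n n ℂ} (h : Contr W) : (1 - Wᴴ * W).PosSemidef := by
  refine Matrix.PosSemidef.of_dotProduct_mulVec_nonneg ?_ ?_
  · simp [Matrix.IsHermitian, conjTranspose_sub, conjTranspose_mul]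
  · intro x
    rw [sub_mulVec, one_mulVec, dotProduct_sub, star_dot_self, star_dot_mulVec_self,
      ← Complex.ofReal_sub, Complex.zero_le_real]
    linarith [h x]

lemma Contr.conjT {W : Matrix n n ℂ} (h : Contr W) : Contr Wᴴ := by
  intro x
  have key : (nsq (Wᴴ *ᵥ x) : ℂ) = star x ⬝ᵥ (W *ᵥ (Wᴴ *ᵥ x)) := by
    rw [dot_mulVec_eq, star_dot_self]
  have habs : nsq (Wᴴ *ᵥ x) ≤ Real.sqrt (nsq x) * Real.sqrt (nsq (W *ᵥ (Wᴴ *ᵥ x))) := by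
    calc nsq (Wᴴ *ᵥ x) = ‖(nsq (Wᴴ *ᵥ x) : ℂ)‖ := by
          rw [Complex.norm_real, Real.norm_eq_abs, abs_of_nonneg (nsq_nonneg _)]
      _ = ‖star x ⬝ᵥ (W *ᵥ (Wᴴ *ᵥ x))‖ := by rw [key]
      _ ≤ _ := abs_star_dot_le _ _
  have h2 : Real.sqrt (nsq (W *ᵥ (Wᴴ *ᵥ x))) ≤ Real.sqrt (nsq (Wᴴ *ᵥ x)) :=
    Real.sqrt_le_sqrt (h _)
  have h3 : nsq (Wᴴ *ᵥ x) ≤ Real.sqrt (nsq x) * Real.sqrt (nsq (Wᴴ *ᵥ x)) := by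
    refine habs.trans (mul_le_mul_of_nonneg_left h2 (Real.sqrt_nonneg _))
  have hb := Real.sq_sqrt (nsq_nonneg x)
  have ha := Real.sq_sqrt (nsq_nonneg (Wᴴ *ᵥ x))
  nlinarith [sq_nonneg (Real.sqrt (nsq x) - Real.sqrt (nsq (Wᴴ *ᵥ x))),
    Real.sqrt_nonneg (nsq x), Real.sqrt_nonneg (nsq (Wᴴ *ᵥ x))]

lemma Contr.mul {W W' : Matrix n n ℂ} (h : Contr W) (h' : Contr W') : Contr (W * W') := by
  intro x
  rw [← mulVec_mulVec]
  exact (h _).trans (h' x)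

lemma abs_dot_mulVec_le {C : Matrix n n ℂ} (hC : Contr C) (u : n → ℂ) :
    ‖star u ⬝ᵥ (C *ᵥ u)‖ ≤ nsq u := by
  refine (abs_star_dot_le _ _).trans ?_
  calc Real.sqrt (nsq u) * Real.sqrt (nsq (C *ᵥ u))
      ≤ Real.sqrt (nsq u) * Real.sqrt (nsq u) :=
        mul_le_mul_of_nonneg_left (Real.sqrt_le_sqrt (hC u)) (Real.sqrt_nonneg _)
    _ = nsq u := Real.mul_self_sqrt (nsq_nonneg _)
/-! ### spectral decomposition of `Xᴴ * X` -/

section Spectral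

variable {n : Type*} [Fintype n] [DecidableEq n] (X : Matrix n n ℂ)

noncomputable def sU : Matrix n n ℂ :=
  ((Matrix.posSemidef_conjTranspose_mul_self X).1.eigenvectorUnitary : Matrix n n ℂ)

noncomputable def sEv : n → ℝ :=
  (Matrix.posSemidef_conjTranspose_mul_self X).1.eigenvalues

lemma sEv_nonneg (i : n) : 0 ≤ sEv X i :=
  (Matrix.posSemidef_conjTranspose_mul_self X).eigenvalues_nonneg i

noncomputable def cdiag (g : n → ℂ) : Matrix n n ℂ :=
  sU X * Matrix.diagonal g * (sU X)ᴴ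

lemma sU_mul_conjT : sU X * (sU X)ᴴ = 1 := by
  have := ((Matrix.posSemidef_conjTranspose_mul_self X).1.eigenvectorUnitary).2
  rw [Matrix.mem_unitaryGroup_iff] at this
  rw [← Matrix.star_eq_conjTranspose]
  exact this

lemma conjT_mul_sU : (sU X)ᴴ * sU X = 1 := by
  have := ((Matrix.posSemidef_conjTranspose_mul_self X).1.eigenvectorUnitary).2
  rw [Matrix.mem_unitaryGroup_iff'] at this
  rw [← Matrix.star_eq_conjTranspose]
  exact this

lemma cdiag_mul (f g : n → ℂ) : cdiag X f * cdiag X g = cdiag X (fun i => f i * g i) := by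
  unfold cdiag
  calc sU X * Matrix.diagonal f * (sU X)ᴴ * (sU X * Matrix.diagonal g * (sU X)ᴴ)
      = sU X * Matrix.diagonal f * ((sU X)ᴴ * sU X) * Matrix.diagonal g * (sU X)ᴴ := by
        simp only [Matrix.mul_assoc]
    _ = sU X * (Matrix.diagonal f * Matrix.diagonal g) * (sU X)ᴴ := by
        rw [conjT_mul_sU, Matrix.mul_one]; simp only [Matrix.mul_assoc]
    _ = _ := by rw [Matrix.diagonal_mul_diagonal]

lemma cdiag_conjT (g : n → ℂ) : (cdiag X g)ᴴ = cdiag X (fun i => star (g i)) := by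
  unfold cdiag
  rw [conjTranspose_mul, conjTranspose_mul, conjTranspose_conjTranspose,
    Matrix.diagonal_conjTranspose]
  simp only [Matrix.mul_assoc]
  rfl

lemma cdiag_one : cdiag X (fun _ => 1) = 1 := by
  unfold cdiag
  rw [show Matrix.diagonal (fun _ : n => (1 : ℂ)) = 1 from Matrix.diagonal_one, Matrix.mul_one,
    sU_mul_conjT]

lemma cdiag_sub (f g : n → ℂ) : cdiag X f - cdiag X g = cdiag X (fun i => f i - g i) := by
  unfold cdiag
  rw [← Matrix.diagonal_sub, Matrix.mul_sub, Matrix.sub_mul]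

lemma trace_cdiag (g : n → ℂ) : (cdiag X g).trace = ∑ i, g i := by
  unfold cdiag
  rw [Matrix.trace_mul_cycle, conjT_mul_sU, Matrix.one_mul, Matrix.trace_diagonal]

lemma cdiag_posSemidef {g : n → ℂ} (hg : ∀ i, 0 ≤ g i) : (cdiag X g).PosSemidef :=
  (Matrix.PosSemidef.diagonal hg).mul_mul_conjTranspose_same (sU X)

lemma spectral : Xᴴ * X = cdiag X (fun i => (sEv X i : ℂ)) :=
  (Matrix.posSemidef_conjTranspose_mul_self X).1.spectral_theorem

lemma sqrt_eq_cdiag :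
    (Matrix.posSemidef_conjTranspose_mul_self X).sqrt
      = cdiag X (fun i => (Real.sqrt (sEv X i) : ℂ)) := rfl

lemma traceNorm_eq_sum : traceNorm X = ∑ i, Real.sqrt (sEv X i) := by
  rw [traceNorm_def, sqrt_eq_cdiag, trace_cdiag, ← Complex.ofReal_sum, Complex.ofReal_re]

lemma traceNorm_nonneg : 0 ≤ traceNorm X := by
  rw [traceNorm_eq_sum]
  exact Finset.sum_nonneg fun i _ => Real.sqrt_nonneg _

end Spectral
/-! ### duality for the trace norm -/

section Duality

variable {n : Type*} [Fintype n] [DecidableEq n] (X : Matrix n n ℂ)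

private noncomputable def piF : n → ℂ := fun i => if sEv X i = 0 then 0 else 1

private noncomputable def pinvF : n → ℂ :=
  fun i => if sEv X i = 0 then 0 else ((Real.sqrt (sEv X i))⁻¹ : ℂ)

private lemma mul_cdiag_pi : X * cdiag X (piF X) = X := by
  have h1 : (1 : Matrix n n ℂ) - cdiag X (piF X) = cdiag X (fun i => 1 - piF X i) := by
    rw [← cdiag_one X, cdiag_sub]
  have hz : X * (1 - cdiag X (piF X)) = 0 := by
    have hself : (X * (1 - cdiag X (piF X)))ᴴ * (X * (1 - cdiag X (piF X))) = 0 := by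
      rw [h1, conjTranspose_mul, cdiag_conjT]
      have hst : (fun i => star ((1 : ℂ) - piF X i)) = fun i => 1 - piF X i := by
        funext i
        unfold piF
        by_cases h : sEv X i = 0 <;> simp [h]
      rw [hst]
      calc cdiag X (fun i => 1 - piF X i) * Xᴴ * (X * cdiag X (fun i => 1 - piF X i))
          = cdiag X (fun i => 1 - piF X i) * (Xᴴ * X) * cdiag X (fun i => 1 - piF X i) := by
            simp only [Matrix.mul_assoc]
        _ = 0 := by
            rw [spectral X, cdiag_mul, cdiag_mul]
            have hfun : (fun i => (fun i => ((1:ℂ) - piF X i) * (sEv X i : ℂ)) i * (1 - piF X i))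
                = fun _ : n => (0 : ℂ) := by
              funext i
              unfold piF
              by_cases h : sEv X i = 0 <;> simp [h]
            rw [hfun]
            unfold cdiag
            simp
    exact Matrix.conjTranspose_mul_self_eq_zero.mp hself
  calc X * cdiag X (piF X)
      = X * 1 - X * (1 - cdiag X (piF X)) := by rw [Matrix.mul_sub, Matrix.mul_one]; abel
    _ = X := by rw [hz, Matrix.mul_one, sub_zero]

private noncomputable def polarW : Matrix n n ℂ := X * cdiag X (pinvF X)

private lemma star_pinvF : (fun i => star (pinvF X i)) = pinvF X := by
  funext i; unfold pinvF; split <;> simp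

private lemma polarW_conjT_mul : (polarW X)ᴴ * polarW X = cdiag X (piF X) := by
  unfold polarW
  rw [conjTranspose_mul, cdiag_conjT, star_pinvF]
  calc cdiag X (pinvF X) * Xᴴ * (X * cdiag X (pinvF X))
      = cdiag X (pinvF X) * (Xᴴ * X) * cdiag X (pinvF X) := by simp only [Matrix.mul_assoc]
    _ = cdiag X (piF X) := by
        rw [spectral X, cdiag_mul, cdiag_mul]
        apply congrArg (cdiag X)
        funext i
        unfold pinvF piF
        by_cases h : sEv X i = 0
        · simp [h]
        · have hpos : 0 < sEv X i := lt_of_le_of_ne (sEv_nonneg X i) (Ne.symm h)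
          have hs : Real.sqrt (sEv X i) ≠ 0 := ne_of_gt (Real.sqrt_pos.mpr hpos)
          simp only [h, ite_false]
          rw [← Complex.ofReal_inv, ← Complex.ofReal_mul, ← Complex.ofReal_mul]
          rw [show (Real.sqrt (sEv X i))⁻¹ * sEv X i * (Real.sqrt (sEv X i))⁻¹ = (1:ℝ) by
            rw [mul_comm, ← mul_assoc, ← mul_inv, Real.mul_self_sqrt hpos.le, inv_mul_cancel₀ h]]
          simp

private lemma contr_polarW : Contr (polarW X) := by
  apply contr_of_psd
  rw [polarW_conjT_mul, ← cdiag_one X, cdiag_sub]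
  apply cdiag_posSemidef
  intro i
  unfold piF
  split <;> simp

private lemma polarW_mul_sqrt :
    polarW X * (Matrix.posSemidef_conjTranspose_mul_self X).sqrt = X := by
  rw [sqrt_eq_cdiag, polarW, Matrix.mul_assoc, cdiag_mul]
  have hfun : (fun i => pinvF X i * (Real.sqrt (sEv X i) : ℂ)) = piF X := by
    funext i
    unfold pinvF piF
    by_cases h : sEv X i = 0
    · simp [h]
    · have hpos : 0 < sEv X i := lt_of_le_of_ne (sEv_nonneg X i) (Ne.symm h)
      have hs : (Real.sqrt (sEv X i) : ℂ) ≠ 0 := by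
        simpa using ne_of_gt (Real.sqrt_pos.mpr hpos)
      simp only [h, ite_false]
      rw [← Complex.ofReal_inv]
      rw [Complex.ofReal_inv]; exact inv_mul_cancel₀ hs
  rw [hfun, mul_cdiag_pi]

/-- T2 : the trace norm is attained by a contraction. -/
lemma exists_dual_contraction :
    ∃ W : Matrix n n ℂ, Contr W ∧ (W * X).trace = (traceNorm X : ℂ) := by
  refine ⟨(polarW X)ᴴ, (contr_polarW X).conjT, ?_⟩
  have hWX : (polarW X)ᴴ * X = cdiag X (fun i => (Real.sqrt (sEv X i) : ℂ)) := by
    unfold polarW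
    rw [conjTranspose_mul, cdiag_conjT, star_pinvF, Matrix.mul_assoc, spectral X, cdiag_mul]
    apply congrArg (cdiag X)
    funext i
    unfold pinvF
    by_cases h : sEv X i = 0
    · simp [h]
    · have hpos : 0 < sEv X i := lt_of_le_of_ne (sEv_nonneg X i) (Ne.symm h)
      have hs : Real.sqrt (sEv X i) ≠ 0 := ne_of_gt (Real.sqrt_pos.mpr hpos)
      simp only [h, ite_false]
      rw [← Complex.ofReal_inv, ← Complex.ofReal_mul]
      congr 1
      rw [inv_mul_eq_div, div_eq_iff hs, Real.mul_self_sqrt hpos.le]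
  rw [hWX, trace_cdiag, traceNorm_eq_sum, Complex.ofReal_sum]

/-- T1 : duality upper bound. -/
lemma abs_trace_le_traceNorm {W : Matrix n n ℂ} (hW : Contr W) :
    ‖(W * X).trace‖ ≤ traceNorm X := by
  have hX : W * X = W * polarW X * cdiag X (fun i => (Real.sqrt (sEv X i) : ℂ)) := by
    rw [Matrix.mul_assoc, ← sqrt_eq_cdiag, polarW_mul_sqrt]
  set C := W * polarW X with hC
  have hCc : Contr C := hW.mul (contr_polarW X)
  have htr : (W * X).trace = ∑ i, ((sU X)ᴴ * C * sU X) i i * (Real.sqrt (sEv X i) : ℂ) := by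
    rw [hX]
    unfold cdiag
    calc (C * (sU X * Matrix.diagonal (fun i => (Real.sqrt (sEv X i) : ℂ)) * (sU X)ᴴ)).trace
        = ((C * sU X * Matrix.diagonal (fun i => (Real.sqrt (sEv X i) : ℂ))) * (sU X)ᴴ).trace := by
          simp only [Matrix.mul_assoc]
      _ = ((sU X)ᴴ * (C * sU X * Matrix.diagonal (fun i => (Real.sqrt (sEv X i) : ℂ)))).trace :=
          Matrix.trace_mul_comm _ _
      _ = (((sU X)ᴴ * C * sU X) * Matrix.diagonal (fun i => (Real.sqrt (sEv X i) : ℂ))).trace := by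
          simp only [Matrix.mul_assoc]
      _ = ∑ i, ((sU X)ᴴ * C * sU X) i i * (Real.sqrt (sEv X i) : ℂ) := by
          rw [Matrix.trace]
          refine Finset.sum_congr rfl fun i _ => ?_
          rw [Matrix.diag_apply, Matrix.mul_diagonal]
  have hdiag : ∀ i : n, ‖((sU X)ᴴ * C * sU X) i i‖ ≤ 1 := by
    intro i
    set u : n → ℂ := fun a => sU X a i with hu
    have hentry : ((sU X)ᴴ * C * sU X) i i = star u ⬝ᵥ (C *ᵥ u) := by
      simp only [Matrix.mul_apply, Matrix.conjTranspose_apply, Matrix.mulVec, dotProduct,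
        Finset.sum_mul, Finset.mul_sum, Pi.star_apply, hu]
      rw [Finset.sum_comm]
      refine Finset.sum_congr rfl fun a _ => ?_
      refine Finset.sum_congr rfl fun b _ => ?_
      ring
    have hnu : nsq u = 1 := by
      have h1 : ((sU X)ᴴ * sU X) i i = (1 : Matrix n n ℂ) i i := by rw [conjT_mul_sU]
      rw [Matrix.one_apply_eq] at h1
      have h2 : ((sU X)ᴴ * sU X) i i = (nsq u : ℂ) := by
        simp only [Matrix.mul_apply, Matrix.conjTranspose_apply, nsq, Complex.ofReal_sum, hu]
        refine Finset.sum_congr rfl fun a _ => ?_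
        rw [Complex.normSq_eq_conj_mul_self, Complex.star_def]
      rw [h2] at h1
      exact_mod_cast h1
    rw [hentry, ← hnu]
    exact abs_dot_mulVec_le hCc u
  calc ‖(W * X).trace‖
      = ‖∑ i, ((sU X)ᴴ * C * sU X) i i * (Real.sqrt (sEv X i) : ℂ)‖ := by rw [htr]
    _ ≤ ∑ i, ‖((sU X)ᴴ * C * sU X) i i * (Real.sqrt (sEv X i) : ℂ)‖ :=
        norm_sum_le _ _
    _ ≤ ∑ i, Real.sqrt (sEv X i) := by
        refine Finset.sum_le_sum fun i _ => ?_
        rw [norm_mul, Complex.norm_real, Real.norm_eq_abs, abs_of_nonneg (Real.sqrt_nonneg _)]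
        calc ‖((sU X)ᴴ * C * sU X) i i‖ * Real.sqrt (sEv X i)
            ≤ 1 * Real.sqrt (sEv X i) :=
              mul_le_mul_of_nonneg_right (hdiag i) (Real.sqrt_nonneg _)
          _ = Real.sqrt (sEv X i) := one_mul _
    _ = traceNorm X := (traceNorm_eq_sum X).symm

end Duality
/-! ### consequences of duality -/

section Consequences

variable {n : Type*} [Fintype n] [DecidableEq n]

lemma traceNorm_sub_le (A B : Matrix n n ℂ) :
    traceNorm (A - B) ≤ traceNorm A + traceNorm B := by
  obtain ⟨W, hW, hTr⟩ := exists_dual_contraction (A - B)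
  have h1 : traceNorm (A - B) = ((W * A).trace).re - ((W * B).trace).re := by
    rw [show traceNorm (A - B) = ((W * (A - B)).trace).re by rw [hTr, Complex.ofReal_re],
      Matrix.mul_sub, Matrix.trace_sub, Complex.sub_re]
  have h2 : ((W * A).trace).re ≤ traceNorm A :=
    (Complex.re_le_norm _).trans (abs_trace_le_traceNorm A hW)
  have h3 : -((W * B).trace).re ≤ traceNorm B :=
    (neg_le_abs _).trans ((Complex.abs_re_le_norm _).trans (abs_trace_le_traceNorm B hW))
  linarith

/-- trace norm of a PSD matrix is its trace. -/
lemma traceNorm_of_posSemidef {A : Matrix n n ℂ} (hA : A.PosSemidef) :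
    traceNorm A = (A.trace).re := by
  have h : A = (Matrix.posSemidef_conjTranspose_mul_self A).sqrt := by
    apply hA.eq_sqrt_of_sq_eq
    rw [pow_two]
    nth_rewrite 1 [← Matrix.IsHermitian.eq hA.1]
    rfl
  rw [traceNorm_def, ← h]

/-- unitary conjugation invariance of the trace norm. -/
lemma traceNorm_unitary_conj (A X : Matrix n n ℂ) (h1 : Aᴴ * A = 1) :
    traceNorm (A * X * Aᴴ) = traceNorm X := by
  set S0 := (Matrix.posSemidef_conjTranspose_mul_self X).sqrt with hS0
  have hS0psd : S0.PosSemidef := (Matrix.posSemidef_conjTranspose_mul_self X).posSemidef_sqrt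
  have hS0sq : S0 * S0 = Xᴴ * X := (Matrix.posSemidef_conjTranspose_mul_self X).sqrt_mul_self
  have hQpsd : (A * S0 * Aᴴ).PosSemidef := hS0psd.mul_mul_conjTranspose_same A
  have hsq : (A * S0 * Aᴴ) ^ 2 = (A * X * Aᴴ)ᴴ * (A * X * Aᴴ) := by
    rw [pow_two]
    calc A * S0 * Aᴴ * (A * S0 * Aᴴ) = A * (S0 * (Aᴴ * A) * S0) * Aᴴ := by
          simp only [Matrix.mul_assoc]
      _ = A * (Xᴴ * X) * Aᴴ := by rw [h1, Matrix.mul_one, hS0sq]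
      _ = (A * X * Aᴴ)ᴴ * (A * X * Aᴴ) := by
          rw [conjTranspose_mul, conjTranspose_mul, conjTranspose_conjTranspose]
          calc A * (Xᴴ * X) * Aᴴ = A * Xᴴ * ((Aᴴ * A) * (X * Aᴴ)) := by
                rw [h1, Matrix.one_mul]; simp only [Matrix.mul_assoc]
            _ = A * (Xᴴ * Aᴴ) * (A * X * Aᴴ) := by simp only [Matrix.mul_assoc]
  have hsqrt : A * S0 * Aᴴ = (Matrix.posSemidef_conjTranspose_mul_self (A * X * Aᴴ)).sqrt :=
    hQpsd.eq_sqrt_of_sq_eq _ hsq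
  rw [traceNorm_def, ← hsqrt, traceNorm_def]
  congr 1
  calc (A * S0 * Aᴴ).trace = (Aᴴ * (A * S0)).trace := Matrix.trace_mul_comm _ _
    _ = ((Aᴴ * A) * S0).trace := by simp only [Matrix.mul_assoc]
    _ = S0.trace := by rw [h1, Matrix.one_mul]

end Consequences
/-! ### pinching -/

section Pinch

variable {n m : Type*} [Fintype n] [Fintype m] [DecidableEq n] [DecidableEq m]

def pinch (Z : Matrix (n × m) (n × m) ℂ) : Matrix (n × m) (n × m) ℂ :=
  Matrix.of fun p q => if p.1 = q.1 then Z p q else 0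

private def resV (x : (n × m) → ℂ) (i : n) : (n × m) → ℂ :=
  fun q => if q.1 = i then x q else 0

private lemma nsq_resV_sum (x : (n × m) → ℂ) : ∑ i, nsq (resV x i) = nsq x := by
  unfold nsq resV
  rw [Finset.sum_comm]
  refine Finset.sum_congr rfl fun p _ => ?_
  rw [show (fun i => Complex.normSq (if p.1 = i then x p else 0))
      = fun i => if p.1 = i then Complex.normSq (x p) else 0 from ?_]
  · simp
  · funext i
    by_cases h : p.1 = i <;> simp [h]

private lemma nsq_resV_le (x : (n × m) → ℂ) (i : n) : nsq (resV x i) ≤ nsq x := by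
  rw [← nsq_resV_sum x]
  exact Finset.single_le_sum (f := fun j => nsq (resV x j)) (fun j _ => nsq_nonneg _)
    (Finset.mem_univ i)

lemma contr_pinch {W : Matrix (n × m) (n × m) ℂ} (hW : Contr W) : Contr (pinch W) := by
  intro x
  have hmv : ∀ p : n × m, (pinch W *ᵥ x) p = (W *ᵥ resV x p.1) p := by
    intro p
    simp only [Matrix.mulVec, dotProduct, pinch, Matrix.of_apply, resV]
    refine Finset.sum_congr rfl fun q _ => ?_
    by_cases h : p.1 = q.1
    · rw [if_pos h, if_pos h.symm]
    · rw [if_neg h, if_neg (fun hh => h hh.symm), zero_mul, mul_zero]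
  have h1 : nsq (pinch W *ᵥ x) = ∑ i, ∑ a, Complex.normSq ((W *ᵥ resV x i) (i, a)) := by
    unfold nsq
    rw [Fintype.sum_prod_type]
    refine Finset.sum_congr rfl fun i _ => Finset.sum_congr rfl fun a _ => ?_
    rw [hmv (i, a)]
  have h2 : ∀ i : n, ∑ a, Complex.normSq ((W *ᵥ resV x i) (i, a)) ≤ nsq (W *ᵥ resV x i) := by
    intro i
    unfold nsq
    rw [Fintype.sum_prod_type]
    exact Finset.single_le_sum
      (f := fun j => ∑ a, Complex.normSq ((W *ᵥ resV x i) (j, a)))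
      (fun j _ => Finset.sum_nonneg fun a _ => Complex.normSq_nonneg _) (Finset.mem_univ i)
  calc nsq (pinch W *ᵥ x) = ∑ i, ∑ a, Complex.normSq ((W *ᵥ resV x i) (i, a)) := h1
    _ ≤ ∑ i, nsq (W *ᵥ resV x i) := Finset.sum_le_sum fun i _ => h2 i
    _ ≤ ∑ i, nsq (resV x i) := Finset.sum_le_sum fun i _ => hW (resV x i)
    _ = nsq x := nsq_resV_sum x

lemma trace_mul_pinch (W Z : Matrix (n × m) (n × m) ℂ) :
    (W * pinch Z).trace = (pinch W * Z).trace := by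
  simp only [Matrix.trace, Matrix.diag_apply, Matrix.mul_apply, pinch, Matrix.of_apply]
  refine Finset.sum_congr rfl fun p _ => Finset.sum_congr rfl fun q _ => ?_
  by_cases h : q.1 = p.1
  · rw [if_pos h, if_pos h.symm]
  · rw [if_neg h, if_neg (fun hh => h hh.symm), zero_mul, mul_zero]

lemma traceNorm_pinch_le (Z : Matrix (n × m) (n × m) ℂ) :
    traceNorm (pinch Z) ≤ traceNorm Z := by
  obtain ⟨W, hW, hTr⟩ := exists_dual_contraction (pinch Z)
  have h1 : traceNorm (pinch Z) = ((pinch W * Z).trace).re := by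
    rw [show traceNorm (pinch Z) = ((W * pinch Z).trace).re by rw [hTr, Complex.ofReal_re],
      trace_mul_pinch]
  rw [h1]
  exact (Complex.re_le_norm _).trans (abs_trace_le_traceNorm Z (contr_pinch hW))

/-! ### the ancilla-extended matrices `A ⊗ 1` -/

def kmat (m : Type*) [Fintype m] [DecidableEq m] {n : Type*} [Fintype n]
    (A : Matrix n n ℂ) : Matrix (n × m) (n × m) ℂ :=
  Matrix.of fun p q => A p.1 q.1 * (if p.2 = q.2 then 1 else 0)

lemma kmat_mul (A B : Matrix n n ℂ) : kmat m A * kmat m B = kmat m (A * B) := by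
  ext p q
  simp only [kmat, Matrix.mul_apply, Matrix.of_apply, Fintype.sum_prod_type]
  rw [Finset.sum_comm]
  simp only [mul_ite, mul_one, mul_zero, ite_mul, zero_mul, Finset.sum_ite_eq',
    Finset.mem_univ, if_true]
  by_cases h : p.2 = q.2
  · simp [h, Finset.sum_mul]
  · simp [h]

lemma kmat_conjT (A : Matrix n n ℂ) : (kmat m A)ᴴ = kmat m Aᴴ := by
  ext p q
  simp only [kmat, Matrix.conjTranspose_apply, Matrix.of_apply]
  by_cases h : p.2 = q.2
  · rw [if_pos (h.symm : q.2 = p.2), if_pos h, mul_one, mul_one]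
  · rw [if_neg (fun hh : q.2 = p.2 => h hh.symm), if_neg h, mul_zero, mul_zero, star_zero]

lemma kmat_one : kmat m (1 : Matrix n n ℂ) = 1 := by
  ext p q
  simp only [kmat, Matrix.of_apply, Matrix.one_apply]
  by_cases h1 : p.1 = q.1 <;> by_cases h2 : p.2 = q.2
  · rw [if_pos h1, if_pos h2, if_pos (Prod.ext h1 h2), mul_one]
  · rw [if_neg h2, mul_zero, if_neg (fun hh : p = q => h2 (congrArg Prod.snd hh))]
  · rw [if_neg h1, zero_mul, if_neg (fun hh : p = q => h1 (congrArg Prod.fst hh))]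
  · rw [if_neg h1, zero_mul, if_neg (fun hh : p = q => h1 (congrArg Prod.fst hh))]

end Pinch


section Channel

variable {n m : Type*} [Fintype n] [Fintype m] [DecidableEq n] [DecidableEq m]

lemma measChannel_apply (U σ : Matrix n n ℂ) :
    measChannel U σ = Matrix.diagonal (fun i => (Uᴴ * σ * U) i i) := by
  show Matrix.diagonal (fun i => (Uᴴ * σ * Uᴴᴴ) i i) = _
  rw [conjTranspose_conjTranspose]

lemma kmat_conj_apply (U : Matrix n n ℂ) (X : Matrix (n × m) (n × m) ℂ) (p q : n × m) :
    (kmat m Uᴴ * X * kmat m U) p q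
      = (Uᴴ * (Matrix.of fun i j => X (i, p.2) (j, q.2)) * U) p.1 q.1 := by
  simp only [Matrix.mul_apply, kmat, Matrix.of_apply, Fintype.sum_prod_type, mul_ite, mul_zero,
    mul_one, ite_mul, zero_mul, Finset.sum_ite_eq', Finset.sum_ite_eq, Finset.mem_univ, if_true]

lemma tensorApplyLeft_measChannel (U : Matrix n n ℂ) (X : Matrix (n × m) (n × m) ℂ) :
    tensorApplyLeft (measChannel U) X = pinch (kmat m Uᴴ * X * kmat m U) := by
  ext p q
  show (measChannel U (Matrix.of fun i j => X (i, p.2) (j, q.2))) p.1 q.1 = _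
  rw [measChannel_apply, Matrix.diagonal_apply]
  unfold pinch
  rw [Matrix.of_apply]
  by_cases h : p.1 = q.1
  · rw [if_pos h, if_pos h, kmat_conj_apply, h]
  · rw [if_neg h, if_neg h]

lemma traceNorm_measChannel_le (U : Matrix n n ℂ) (hU2 : U * Uᴴ = 1)
    (X : Matrix (n × m) (n × m) ℂ) :
    traceNorm (tensorApplyLeft (measChannel U) X) ≤ traceNorm X := by
  rw [tensorApplyLeft_measChannel]
  refine (traceNorm_pinch_le _).trans (le_of_eq ?_)
  have h : kmat m Uᴴ * X * kmat m U = kmat m Uᴴ * X * (kmat m Uᴴ)ᴴ := by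
    rw [kmat_conjT, conjTranspose_conjTranspose]
  rw [h]
  exact traceNorm_unitary_conj (kmat m Uᴴ) X
    (by rw [kmat_conjT, conjTranspose_conjTranspose, kmat_mul, hU2, kmat_one])

lemma tensorApplyLeft_sub (S T : Matrix n n ℂ →ₗ[ℂ] Matrix n n ℂ)
    (X : Matrix (n × m) (n × m) ℂ) :
    tensorApplyLeft (S - T) X = tensorApplyLeft S X - tensorApplyLeft T X := by
  ext p q
  show ((S - T) _) p.1 q.1 = _
  rw [LinearMap.sub_apply, Matrix.sub_apply]
  rfl

end Channel


section Achieve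

variable {n m : Type*} [Fintype n] [Fintype m] [DecidableEq n] [DecidableEq m]

private lemma mul_star_self (z : ℂ) : z * star z = (Complex.normSq z : ℂ) := by
  rw [Complex.star_def, Complex.mul_conj]

private lemma sum_block {x y : m → ℂ} (a b a' b' ε : ℂ)
    (horth : (∑ c, star (x c) * y c) = 0) (hε : ε * ε = 1) :
    (∑ c, (a * star (x c) + ε * b * star (y c)) * (x c * a' + ε * y c * b'))
      = a * (∑ c, star (x c) * x c) * a' + b * (∑ c, star (y c) * y c) * b' := by
  have horth' : (∑ c, star (y c) * x c) = 0 := by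
    have h1 : (∑ c, star (y c) * x c) = star (∑ c, star (x c) * y c) := by
      rw [star_sum]
      refine Finset.sum_congr rfl fun c _ => ?_
      rw [star_mul', star_star]
      ring
    rw [h1, horth, star_zero]
  have hterm : ∀ c, (a * star (x c) + ε * b * star (y c)) * (x c * a' + ε * y c * b')
      = (a * a') * (star (x c) * x c) + ((b * b') * (ε * ε)) * (star (y c) * y c)
        + (ε * (a * b')) * (star (x c) * y c) + (ε * (b * a')) * (star (y c) * x c) := by
    intro c; ring
  simp_rw [hterm, hε, mul_one]
  rw [Finset.sum_add_distrib, Finset.sum_add_distrib, Finset.sum_add_distrib,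
    ← Finset.mul_sum, ← Finset.mul_sum, ← Finset.mul_sum, ← Finset.mul_sum,
    horth, horth', mul_zero, mul_zero, add_zero, add_zero]
  ring

lemma traceNorm_achieve (U : Matrix n n ℂ) (hU2 : U * Uᴴ = 1)
    (C : Matrix n m ℂ)
    (htr : (Cᴴ * C).trace = 1)
    (horth : ∀ i, (C * Cᴴ * U) i i = 0) :
    traceNorm (Matrix.of fun (p q : n × m) => C p.1 p.2 * star (C q.1 q.2)) = 1 ∧
    traceNorm (tensorApplyLeft (measChannel U - measChannel (1 : Matrix n n ℂ))
      (Matrix.of fun (p q : n × m) => C p.1 p.2 * star (C q.1 q.2))) = 2 := by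
  set X : Matrix (n × m) (n × m) ℂ :=
    Matrix.of fun p q => C p.1 p.2 * star (C q.1 q.2) with hXdef
  set G : Matrix n m ℂ := Uᴴ * C with hGdef
  -- basic sums
  have htrC : (∑ p : n × m, star (C p.1 p.2) * C p.1 p.2) = (1 : ℂ) := by
    rw [← htr]
    rw [Matrix.trace]
    rw [Fintype.sum_prod_type]
    rw [Finset.sum_comm]
    refine Finset.sum_congr rfl fun b _ => ?_
    simp only [Matrix.diag_apply, Matrix.mul_apply, Matrix.conjTranspose_apply]
  have hGtr : (Gᴴ * G).trace = 1 := by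
    rw [hGdef, conjTranspose_mul, conjTranspose_conjTranspose, ← Matrix.mul_assoc,
      Matrix.mul_assoc (Cᴴ), hU2, Matrix.mul_one, htr]
  have htrG : (∑ p : n × m, star (G p.1 p.2) * G p.1 p.2) = (1 : ℂ) := by
    rw [← hGtr, Matrix.trace, Fintype.sum_prod_type, Finset.sum_comm]
    refine Finset.sum_congr rfl fun b _ => ?_
    simp only [Matrix.diag_apply, Matrix.mul_apply, Matrix.conjTranspose_apply]
  -- orthogonality of the rows of G and C
  have horthG : ∀ i, (∑ c, star (G i c) * C i c) = 0 := by
    intro i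
    have h1 : (∑ c, star (G i c) * C i c) = (C * Cᴴ * U) i i := by
      simp only [hGdef, Matrix.mul_apply, Matrix.conjTranspose_apply, star_sum, star_mul',
        star_star, Finset.sum_mul]
      rw [Finset.sum_comm]
      refine Finset.sum_congr rfl fun j _ => ?_
      refine Finset.sum_congr rfl fun c _ => ?_
      ring
    rw [h1, horth]
  -- part 1 : traceNorm X = 1
  have hXpsd : X.PosSemidef := by
    refine Matrix.PosSemidef.of_dotProduct_mulVec_nonneg ?_ ?_
    · ext p q
      simp only [hXdef, Matrix.conjTranspose_apply, Matrix.of_apply, star_mul', star_star]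
      ring
    · intro x
      have hsum : star x ⬝ᵥ (X *ᵥ x)
          = (∑ p, star (x p) * C p.1 p.2) * star (∑ p, star (x p) * C p.1 p.2) := by
        simp only [Matrix.mulVec, dotProduct, hXdef, Matrix.of_apply, Pi.star_apply]
        rw [Finset.sum_mul]
        refine Finset.sum_congr rfl fun p _ => ?_
        rw [star_sum, Finset.mul_sum, Finset.mul_sum]
        refine Finset.sum_congr rfl fun q _ => ?_
        simp only [star_mul', star_star]
        ring
      rw [hsum, mul_star_self]
      exact Complex.zero_le_real.mpr (Complex.normSq_nonneg _)
  have hXtrace : X.trace = 1 := by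
    rw [Matrix.trace, ← htrC]
    refine Finset.sum_congr rfl fun p _ => ?_
    simp only [Matrix.diag_apply, hXdef, Matrix.of_apply]
    ring
  have part1 : traceNorm X = 1 := by
    rw [traceNorm_of_posSemidef hXpsd, hXtrace, Complex.one_re]
  refine ⟨part1, ?_⟩
  -- part 2 : explicit form of Y
  set Y := tensorApplyLeft (measChannel U - measChannel (1 : Matrix n n ℂ)) X with hYdef
  have hslice : ∀ p q : n × m, (Uᴴ * (Matrix.of fun i j => X (i, p.2) (j, q.2)) * U) p.1 q.1
      = G p.1 p.2 * star (G q.1 q.2) := by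
    intro p q
    have hstarG : star (G q.1 q.2) = ∑ j, star (C j q.2) * U j q.1 := by
      simp only [hGdef, Matrix.mul_apply, Matrix.conjTranspose_apply, star_sum, star_mul',
        star_star]
      refine Finset.sum_congr rfl fun j _ => ?_
      ring
    have hG1 : G p.1 p.2 = ∑ i, star (U i p.1) * C i p.2 := by
      simp only [hGdef, Matrix.mul_apply, Matrix.conjTranspose_apply]
    rw [hstarG, hG1, Fintype.sum_mul_sum]
    simp only [Matrix.mul_apply, Matrix.conjTranspose_apply, Matrix.of_apply, hXdef,
      Finset.sum_mul]
    rw [Finset.sum_comm]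
    refine Finset.sum_congr rfl fun i _ => ?_
    refine Finset.sum_congr rfl fun j _ => ?_
    ring
  have hY : Y = Matrix.of fun p q : n × m => if p.1 = q.1 then
      (G p.1 p.2 * star (G q.1 q.2) - C p.1 p.2 * star (C q.1 q.2)) else 0 := by
    rw [hYdef, tensorApplyLeft_sub, tensorApplyLeft_measChannel, tensorApplyLeft_measChannel]
    ext p q
    rw [Matrix.sub_apply]
    unfold pinch
    rw [Matrix.of_apply, Matrix.of_apply, Matrix.of_apply]
    rw [kmat_conj_apply U X p q, kmat_conj_apply (1 : Matrix n n ℂ) X p q, hslice p q]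
    have h1 : ((1 : Matrix n n ℂ)ᴴ * (Matrix.of fun i j => X (i, p.2) (j, q.2))
        * (1 : Matrix n n ℂ)) p.1 q.1 = C p.1 p.2 * star (C q.1 q.2) := by
      rw [conjTranspose_one, Matrix.one_mul, Matrix.mul_one]
      rfl
    rw [h1]
    by_cases h : p.1 = q.1
    · rw [if_pos h, if_pos h, if_pos h]
    · rw [if_neg h, if_neg h, if_neg h, sub_zero]
  -- the positive square root of Yᴴ Y
  set Q : Matrix (n × m) (n × m) ℂ := Matrix.of fun p q : n × m => if p.1 = q.1 then
      (G p.1 p.2 * star (G q.1 q.2) + C p.1 p.2 * star (C q.1 q.2)) else 0 with hQdef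
  have hQpsd : Q.PosSemidef := by
    refine Matrix.PosSemidef.of_dotProduct_mulVec_nonneg ?_ ?_
    · ext p q
      simp only [hQdef, Matrix.conjTranspose_apply, Matrix.of_apply]
      by_cases h : p.1 = q.1
      · rw [if_pos h, if_pos h.symm]
        simp only [star_add, star_mul', star_star]
        ring
      · rw [if_neg h, if_neg (fun hh : q.1 = p.1 => h hh.symm), star_zero]
    · intro x
      set tG : n → ℂ := fun i => ∑ a, star (x (i, a)) * G i a with htGdef
      set tC : n → ℂ := fun i => ∑ a, star (x (i, a)) * C i a with htCdef
      have hmv : ∀ p : n × m, (Q *ᵥ x) p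
          = G p.1 p.2 * star (tG p.1) + C p.1 p.2 * star (tC p.1) := by
        intro p
        show (∑ q, Q p q * x q) = _
        rw [Fintype.sum_prod_type]
        rw [Finset.sum_comm]
        have hcol : ∀ b : m, (∑ j, Q p (j, b) * x (j, b))
            = (G p.1 p.2 * star (G p.1 b) + C p.1 p.2 * star (C p.1 b)) * x (p.1, b) := by
          intro b
          refine Finset.sum_eq_single_of_mem p.1 (Finset.mem_univ _) ?_ |>.trans ?_
          · intro j _ hne
            have : Q p (j, b) = 0 := by
              simp only [hQdef, Matrix.of_apply]
              exact if_neg (fun hh => hne hh.symm)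
            rw [this, zero_mul]
          · simp [hQdef]
        rw [Finset.sum_congr rfl fun b _ => hcol b]
        rw [htGdef, htCdef]
        simp only [star_sum, star_mul', star_star, Finset.mul_sum]
        rw [← Finset.sum_add_distrib]
        refine Finset.sum_congr rfl fun b _ => ?_
        ring
      have hdot : star x ⬝ᵥ (Q *ᵥ x)
          = ∑ i, (tG i * star (tG i) + tC i * star (tC i)) := by
        show (∑ p, star (x p) * (Q *ᵥ x) p) = _
        rw [Finset.sum_congr rfl fun p _ => by rw [hmv p]]
        rw [Fintype.sum_prod_type]
        refine Finset.sum_congr rfl fun i _ => ?_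
        simp only [mul_add, Finset.sum_add_distrib]
        congr 1
        · rw [htGdef]
          simp only [Finset.sum_mul]
          refine Finset.sum_congr rfl fun a _ => ?_
          ring
        · rw [htCdef]
          simp only [Finset.sum_mul]
          refine Finset.sum_congr rfl fun a _ => ?_
          ring
      have hreal : star x ⬝ᵥ (Q *ᵥ x)
          = ((∑ i, (Complex.normSq (tG i) + Complex.normSq (tC i)) : ℝ) : ℂ) := by
        rw [hdot, Complex.ofReal_sum]
        refine Finset.sum_congr rfl fun i _ => ?_
        rw [Complex.ofReal_add, mul_star_self, mul_star_self]
      rw [hreal]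
      exact Complex.zero_le_real.mpr (Finset.sum_nonneg fun i _ =>
        add_nonneg (Complex.normSq_nonneg _) (Complex.normSq_nonneg _))
  -- hermiticity of Y
  have hYher : Yᴴ = Y := by
    rw [hY]
    ext p q
    simp only [Matrix.conjTranspose_apply, Matrix.of_apply]
    by_cases h : p.1 = q.1
    · rw [if_pos h, if_pos h.symm]
      simp only [star_sub, star_mul', star_star]
      ring
    · rw [if_neg h, if_neg (fun hh : q.1 = p.1 => h hh.symm), star_zero]
  -- the common square
  have hcollapse : ∀ M : Matrix (n × m) (n × m) ℂ, (∀ p q : n × m, p.1 ≠ q.1 → M p q = 0) →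
      ∀ p q : n × m, (M * M) p q = ∑ c, M p (p.1, c) * M (p.1, c) q := by
    intro M hM p q
    rw [Matrix.mul_apply, Fintype.sum_prod_type, Finset.sum_comm]
    refine Finset.sum_congr rfl fun c _ => ?_
    refine Finset.sum_eq_single_of_mem p.1 (Finset.mem_univ _) ?_
    intro j _ hne
    rw [hM p (j, c) (fun hh => hne hh.symm), zero_mul]
  set R : Matrix (n × m) (n × m) ℂ := Matrix.of fun p q : n × m => if p.1 = q.1 then
      (G p.1 p.2 * (∑ c, star (G p.1 c) * G p.1 c) * star (G q.1 q.2)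
        + C p.1 p.2 * (∑ c, star (C p.1 c) * C p.1 c) * star (C q.1 q.2)) else 0 with hRdef
  have hQzero : ∀ p q : n × m, p.1 ≠ q.1 → Q p q = 0 := by
    intro p q h; simp only [hQdef, Matrix.of_apply]; exact if_neg h
  have hYzero : ∀ p q : n × m, p.1 ≠ q.1 → Y p q = 0 := by
    intro p q h; rw [hY]; simp only [Matrix.of_apply]; exact if_neg h
  have hQR : Q * Q = R := by
    ext p q
    rw [hcollapse Q hQzero p q, hRdef]
    simp only [hQdef, Matrix.of_apply, eq_self_iff_true, if_true]
    by_cases h : p.1 = q.1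
    · simp only [if_pos h]
      have hgoal : (∑ c, (G p.1 p.2 * star (G p.1 c) + C p.1 p.2 * star (C p.1 c)) *
            (G p.1 c * star (G q.1 q.2) + C p.1 c * star (C q.1 q.2)))
          = ∑ c, (G p.1 p.2 * star (G p.1 c) + 1 * C p.1 p.2 * star (C p.1 c)) *
            (G p.1 c * star (G q.1 q.2) + 1 * C p.1 c * star (C q.1 q.2)) := by
        refine Finset.sum_congr rfl fun c _ => ?_; ring
      rw [hgoal, sum_block _ _ _ _ _ (horthG p.1) (by norm_num)]
    · simp [h]
  have hYR : Y * Y = R := by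
    ext p q
    rw [hcollapse Y hYzero p q, hRdef]
    conv_lhs => rw [hY]
    simp only [Matrix.of_apply, eq_self_iff_true, if_true]
    by_cases h : p.1 = q.1
    · simp only [if_pos h]
      have hgoal : (∑ c, (G p.1 p.2 * star (G p.1 c) - C p.1 p.2 * star (C p.1 c)) *
            (G p.1 c * star (G q.1 q.2) - C p.1 c * star (C q.1 q.2)))
          = ∑ c, (G p.1 p.2 * star (G p.1 c) + (-1) * C p.1 p.2 * star (C p.1 c)) *
            (G p.1 c * star (G q.1 q.2) + (-1) * C p.1 c * star (C q.1 q.2)) := by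
        refine Finset.sum_congr rfl fun c _ => ?_; ring
      rw [hgoal, sum_block _ _ _ _ _ (horthG p.1) (by norm_num)]
    · simp [h]
  have hQsq : Q ^ 2 = Yᴴ * Y := by
    rw [pow_two, hQR, hYher, hYR]
  -- trace of Q
  have htraceQ : Q.trace = 2 := by
    have : Q.trace = (∑ p : n × m, G p.1 p.2 * star (G p.1 p.2))
        + (∑ p : n × m, C p.1 p.2 * star (C p.1 p.2)) := by
      rw [Matrix.trace, ← Finset.sum_add_distrib]
      refine Finset.sum_congr rfl fun p _ => ?_
      simp only [Matrix.diag_apply, hQdef, Matrix.of_apply, eq_self_iff_true, if_true]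
    rw [this]
    have e1 : (∑ p : n × m, G p.1 p.2 * star (G p.1 p.2)) = 1 := by
      rw [← htrG]; refine Finset.sum_congr rfl fun p _ => mul_comm _ _
    have e2 : (∑ p : n × m, C p.1 p.2 * star (C p.1 p.2)) = 1 := by
      rw [← htrC]; refine Finset.sum_congr rfl fun p _ => mul_comm _ _
    rw [e1, e2]; norm_num
  have hsqrt : Q = (Matrix.posSemidef_conjTranspose_mul_self Y).sqrt :=
    hQpsd.eq_sqrt_of_sq_eq _ hQsq
  show traceNorm Y = 2
  rw [traceNorm_def, ← hsqrt, htraceQ]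
  norm_num

end Achieve

section Diamond

variable {n : Type*} [Fintype n] [DecidableEq n]

lemma diamondNorm_eq_two (U : Matrix n n ℂ) (hU1 : Uᴴ * U = 1) (hU2 : U * Uᴴ = 1)
    (ρ : Matrix n n ℂ) (hρ : IsDensityMatrix ρ) (hdiag : ∀ i, (ρ * U) i i = 0) :
    diamondNorm (measChannel U - measChannel (1 : Matrix n n ℂ)) = 2 := by
  -- `n` is nonempty
  have hne : Nonempty n := by
    rcases isEmpty_or_nonempty n with h | h
    · exfalso
      have h0 : ρ.trace = 0 := by
        rw [Matrix.trace]
        rw [Finset.univ_eq_empty, Finset.sum_empty]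
      rw [hρ.2] at h0
      exact one_ne_zero h0
    · exact h
  set D := Fintype.card n with hD
  have hD1 : 1 ≤ D := Fintype.card_pos
  set k := D - 1 with hk
  have hkD : D = k + 1 := by omega
  set e : n ≃ Fin (k + 1) := (Fintype.equivFin n).trans (finCongr hkD) with he
  set B := hρ.1.sqrt with hBdef
  have hBH : Bᴴ = B := hρ.1.posSemidef_sqrt.1
  have hBB : B * B = ρ := hρ.1.sqrt_mul_self
  set C : Matrix n (Fin (k + 1)) ℂ := Matrix.of fun i a => B i (e.symm a) with hCdef
  have htrC : (Cᴴ * C).trace = 1 := by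
    have h1 : (Cᴴ * C).trace = ∑ a : Fin (k + 1), ∑ i, star (B i (e.symm a)) * B i (e.symm a) := by
      rw [Matrix.trace]
      refine Finset.sum_congr rfl fun a _ => ?_
      simp only [Matrix.diag_apply, Matrix.mul_apply, Matrix.conjTranspose_apply, hCdef,
        Matrix.of_apply]
    rw [h1]
    rw [Equiv.sum_comp e.symm (fun j => ∑ i, star (B i j) * B i j)]
    have h2 : (∑ j, ∑ i, star (B i j) * B i j) = (Bᴴ * B).trace := by
      rw [Matrix.trace]
      refine Finset.sum_congr rfl fun j _ => ?_
      simp only [Matrix.diag_apply, Matrix.mul_apply, Matrix.conjTranspose_apply]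
    rw [h2, hBH, hBB, hρ.2]
  have hCC : C * Cᴴ = ρ := by
    ext i j
    have h1 : (C * Cᴴ) i j = ∑ a : Fin (k + 1), B i (e.symm a) * star (B j (e.symm a)) := by
      simp only [Matrix.mul_apply, Matrix.conjTranspose_apply, hCdef, Matrix.of_apply]
    rw [h1, Equiv.sum_comp e.symm (fun b => B i b * star (B j b))]
    have h2 : (∑ b, B i b * star (B j b)) = (B * Bᴴ) i j := by
      simp only [Matrix.mul_apply, Matrix.conjTranspose_apply]
    rw [h2, hBH, hBB]
  have horthC : ∀ i, (C * Cᴴ * U) i i = 0 := by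
    intro i
    rw [hCC]
    exact hdiag i
  obtain ⟨hach1, hach2⟩ := traceNorm_achieve U hU2 C htrC horthC
  -- the defining set of the diamond norm
  set T : Set ℝ := { t : ℝ | ∃ (k : ℕ) (X : Matrix (n × Fin (k + 1)) (n × Fin (k + 1)) ℂ),
    traceNorm X = 1 ∧ t = traceNorm (tensorApplyLeft
      (measChannel U - measChannel (1 : Matrix n n ℂ)) X) } with hT
  have hmem : (2 : ℝ) ∈ T := ⟨k, _, hach1, hach2.symm⟩
  have hub : ∀ t ∈ T, t ≤ 2 := by
    rintro t ⟨k', X', hX', rfl⟩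
    rw [tensorApplyLeft_sub]
    refine (traceNorm_sub_le _ _).trans ?_
    have hA : traceNorm (tensorApplyLeft (measChannel U) X') ≤ 1 := by
      rw [← hX']
      exact traceNorm_measChannel_le U hU2 X'
    have hB' : traceNorm (tensorApplyLeft (measChannel (1 : Matrix n n ℂ)) X') ≤ 1 := by
      rw [← hX']
      exact traceNorm_measChannel_le (1 : Matrix n n ℂ) (by rw [conjTranspose_one, mul_one]) X'
    linarith
  show sSup T = 2
  exact le_antisymm (csSup_le ⟨2, hmem⟩ hub) (le_csSup ⟨2, hub⟩ hmem)

end Diamond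


section EigenProj

variable {n : Type*} [Fintype n] [DecidableEq n]

private lemma toEuclideanLin_mul_apply (A B : Matrix n n ℂ) (x : EuclideanSpace ℂ n) :
    Matrix.toEuclideanLin (A * B) x = Matrix.toEuclideanLin A (Matrix.toEuclideanLin B x) := by
  rw [Matrix.toEuclideanLin_apply, Matrix.toEuclideanLin_apply, Matrix.toEuclideanLin_apply]
  rw [WithLp.ofLp_toLp]
  rw [← Matrix.mulVec_mulVec]

lemma projMatrix_isHermitian (K : Submodule ℂ (EuclideanSpace ℂ n)) :
    (projMatrix K).IsHermitian := by
  rw [Matrix.isHermitian_iff_isSymmetric]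
  intro x y
  have happ : ∀ z : EuclideanSpace ℂ n, Matrix.toEuclideanLin (projMatrix K) z
      = ((K.orthogonalProjectionOnto z : EuclideanSpace ℂ n)) := by
    intro z
    rw [projMatrix, LinearEquiv.apply_symm_apply]
    rfl
  rw [happ, happ]
  exact Submodule.inner_starProjection_left_eq_right K x y

lemma eigProj_mul_left (V : Matrix n n ℂ) (μ : ℂ) :
    V * eigProj V μ = μ • eigProj V μ := by
  apply Matrix.toEuclideanLin.injective
  ext x
  rw [toEuclideanLin_mul_apply]
  have happ : ∀ z : EuclideanSpace ℂ n, Matrix.toEuclideanLin (eigProj V μ) z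
      = (((Module.End.eigenspace (Matrix.toEuclideanLin V) μ).orthogonalProjectionOnto z :
          EuclideanSpace ℂ n)) := by
    intro z
    rw [eigProj, projMatrix, LinearEquiv.apply_symm_apply]
    rfl
  have hmem := ((Module.End.eigenspace (Matrix.toEuclideanLin V) μ).orthogonalProjectionOnto x).2
  have heig := Module.End.mem_eigenspace_iff.mp hmem
  rw [happ, heig, _root_.map_smul, LinearMap.smul_apply, happ]

lemma eigProj_zero_of_bot (V : Matrix n n ℂ) (μ : ℂ)
    (h : Module.End.eigenspace (Matrix.toEuclideanLin V) μ = ⊥) : eigProj V μ = 0 := by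
  rw [eigProj, projMatrix]
  rw [show (Module.End.eigenspace (Matrix.toEuclideanLin V) μ) = ⊥ from h]
  rw [Submodule.orthogonalProjectionOnto_bot]
  simp

private lemma nsq_eq_zero_iff {x : n → ℂ} : nsq x = 0 ↔ x = 0 := by
  constructor
  · intro h
    funext i
    have := (Finset.sum_eq_zero_iff_of_nonneg
      (fun j _ => Complex.normSq_nonneg (x j))).mp h i (Finset.mem_univ i)
    exact Complex.normSq_eq_zero.mp this
  · intro h
    rw [h]
    simp [nsq]

lemma star_mul_self_eigenvalue (V : Matrix n n ℂ) (hV1 : Vᴴ * V = 1) (μ : ℂ)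
    (hK : Module.End.eigenspace (Matrix.toEuclideanLin V) μ ≠ ⊥) : star μ * μ = 1 := by
  obtain ⟨x, hxK, hx0⟩ := Submodule.exists_mem_ne_zero_of_ne_bot hK
  have hx : Matrix.toEuclideanLin V x = μ • x := Module.End.mem_eigenspace_iff.mp hxK
  set v : n → ℂ := (WithLp.equiv 2 (n → ℂ)) x with hv
  have hmv : V *ᵥ v = μ • v := by
    have := congrArg (WithLp.equiv 2 (n → ℂ)) hx
    change V *ᵥ v = (WithLp.equiv 2 (n → ℂ)) (μ • x) at this
    rw [this]
    rfl
  have hnsq : (nsq (V *ᵥ v) : ℂ) = (nsq v : ℂ) := by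
    rw [← star_dot_mulVec_self V v, hV1, Matrix.one_mulVec, star_dot_self]
  have hnsq2 : nsq (μ • v) = Complex.normSq μ * nsq v := by
    unfold nsq
    rw [Finset.mul_sum]
    refine Finset.sum_congr rfl fun i _ => ?_
    rw [Pi.smul_apply, smul_eq_mul, Complex.normSq_mul]
  rw [hmv] at hnsq
  have hreal : Complex.normSq μ * nsq v = nsq v := by
    have h2 : ((Complex.normSq μ * nsq v : ℝ) : ℂ) = ((nsq v : ℝ) : ℂ) := by
      rw [← hnsq2]; exact hnsq
    exact_mod_cast h2
  have hv0 : nsq v ≠ 0 := by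
    intro h
    exact hx0 (by
      have : v = 0 := nsq_eq_zero_iff.mp h
      apply (WithLp.equiv 2 (n → ℂ)).injective
      rw [← hv, this]
      simp)
  have hμ : Complex.normSq μ = 1 := mul_right_cancel₀ hv0
    (by rw [hreal, one_mul] : Complex.normSq μ * nsq v = 1 * nsq v)
  rw [Complex.star_def, ← Complex.normSq_eq_conj_mul_self, hμ, Complex.ofReal_one]

lemma rho_mul_eq_smul (V : Matrix n n ℂ) (hV1 : Vᴴ * V = 1) (μ : ℂ)
    (ρ : Matrix n n ℂ) (htr : ρ.trace = 1)
    (hP : ρ = eigProj V μ * ρ * eigProj V μ) : ρ * V = μ • ρ := by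
  by_cases hK : Module.End.eigenspace (Matrix.toEuclideanLin V) μ = ⊥
  · exfalso
    have h0 : ρ = 0 := by
      rw [hP, eigProj_zero_of_bot V μ hK, Matrix.zero_mul, Matrix.mul_zero]
    rw [h0, Matrix.trace_zero] at htr
    exact one_ne_zero htr.symm
  · have hμ : star μ * μ = 1 := star_mul_self_eigenvalue V hV1 μ hK
    set P := eigProj V μ with hPdef
    have hPH : Pᴴ = P := projMatrix_isHermitian _
    have hb : V * P = μ • P := eigProj_mul_left V μ
    have hbH : P * Vᴴ = star μ • P := by
      have := congrArg Matrix.conjTranspose hb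
      rw [Matrix.conjTranspose_mul, Matrix.conjTranspose_smul, hPH] at this
      exact this
    have hρVH : ρ * Vᴴ = star μ • ρ := by
      calc ρ * Vᴴ = P * ρ * (P * Vᴴ) := by rw [← Matrix.mul_assoc, ← hP]
        _ = P * ρ * (star μ • P) := by rw [hbH]
        _ = star μ • (P * ρ * P) := by rw [Matrix.mul_smul]
        _ = star μ • ρ := by rw [← hP]
    have hρ1 : ρ = star μ • (ρ * V) := by
      calc ρ = ρ * (Vᴴ * V) := by rw [hV1, Matrix.mul_one]
        _ = (ρ * Vᴴ) * V := by rw [Matrix.mul_assoc]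
        _ = (star μ • ρ) * V := by rw [hρVH]
        _ = star μ • (ρ * V) := by rw [Matrix.smul_mul]
    calc ρ * V = (μ * star μ) • (ρ * V) := by
          rw [mul_comm, hμ, one_smul]
      _ = μ • (star μ • (ρ * V)) := by rw [smul_smul]
      _ = μ • ρ := by rw [← hρ1]

end EigenProj


section Tensor

variable {d N : ℕ}

lemma tensorFamily_mul (ρ σ : Fin N → Matrix (Fin d) (Fin d) ℂ) :
    tensorFamily ρ * tensorFamily σ = tensorFamily fun k => ρ k * σ k := by
  ext f g
  simp only [tensorFamily, Matrix.mul_apply, Matrix.of_apply]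
  rw [Finset.prod_univ_sum, Fintype.piFinset_univ]
  exact Finset.sum_congr rfl fun h _ => Finset.prod_mul_distrib.symm

lemma tensorFamily_conjT (ρ : Fin N → Matrix (Fin d) (Fin d) ℂ) :
    (tensorFamily ρ)ᴴ = tensorFamily fun k => (ρ k)ᴴ := by
  ext f g
  simp only [tensorFamily, Matrix.conjTranspose_apply, Matrix.of_apply, star_prod]

lemma tensorFamily_one : tensorFamily (fun _ : Fin N => (1 : Matrix (Fin d) (Fin d) ℂ)) = 1 := by
  ext f g
  simp only [tensorFamily, Matrix.of_apply]
  by_cases h : f = g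
  · subst h
    simp [Matrix.one_apply]
  · rw [Matrix.one_apply_ne h]
    obtain ⟨k, hk⟩ := Function.ne_iff.mp h
    exact Finset.prod_eq_zero (Finset.mem_univ k) (Matrix.one_apply_ne hk)

lemma tensorFamily_trace (ρ : Fin N → Matrix (Fin d) (Fin d) ℂ) :
    (tensorFamily ρ).trace = ∏ k, (ρ k).trace := by
  simp only [Matrix.trace, Matrix.diag_apply, tensorFamily, Matrix.of_apply]
  rw [Finset.prod_univ_sum, Fintype.piFinset_univ]

lemma tensorFamily_posSemidef (ρ : Fin N → Matrix (Fin d) (Fin d) ℂ)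
    (h : ∀ k, (ρ k).PosSemidef) : (tensorFamily ρ).PosSemidef := by
  choose B hB using fun k => (⟨(h k).sqrt, by rw [(h k).posSemidef_sqrt.1.eq, (h k).sqrt_mul_self]⟩ :
    ∃ B : Matrix (Fin d) (Fin d) ℂ, ρ k = Bᴴ * B)
  have heq : tensorFamily ρ = (tensorFamily B)ᴴ * tensorFamily B := by
    rw [tensorFamily_conjT, tensorFamily_mul]
    exact congrArg tensorFamily (funext fun k => hB k)
  rw [heq]
  exact Matrix.posSemidef_conjTranspose_mul_self _

lemma tensorPow_eq_tensorFamily (V : Matrix (Fin d) (Fin d) ℂ) :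
    tensorPow V N = tensorFamily (fun _ : Fin N => V) := rfl

lemma tensorPow_conjT_mul (V : Matrix (Fin d) (Fin d) ℂ) (hV1 : Vᴴ * V = 1) :
    (tensorPow V N)ᴴ * tensorPow V N = 1 := by
  rw [tensorPow_eq_tensorFamily, tensorFamily_conjT, tensorFamily_mul]
  rw [show (fun k : Fin N => Vᴴ * V) = fun _ : Fin N => (1 : Matrix (Fin d) (Fin d) ℂ) from
    funext fun _ => hV1]
  exact tensorFamily_one

lemma tensorPow_mul_conjT (V : Matrix (Fin d) (Fin d) ℂ) (hV2 : V * Vᴴ = 1) :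
    tensorPow V N * (tensorPow V N)ᴴ = 1 := by
  rw [tensorPow_eq_tensorFamily, tensorFamily_conjT, tensorFamily_mul]
  rw [show (fun k : Fin N => V * Vᴴ) = fun _ : Fin N => (1 : Matrix (Fin d) (Fin d) ℂ) from
    funext fun _ => hV2]
  exact tensorFamily_one

lemma posSemidef_smul_real {n : Type*} [Fintype n] {A : Matrix n n ℂ} (hA : A.PosSemidef)
    {r : ℝ} (hr : 0 ≤ r) : (((r : ℂ)) • A).PosSemidef := by
  refine Matrix.PosSemidef.of_dotProduct_mulVec_nonneg ?_ ?_
  · show ((r : ℂ) • A)ᴴ = (r : ℂ) • A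
    rw [Matrix.conjTranspose_smul, hA.1.eq, Complex.star_def, Complex.conj_ofReal]
  · intro x
    rw [Matrix.smul_mulVec, dotProduct_smul, smul_eq_mul]
    exact mul_nonneg (Complex.zero_le_real.mpr hr) (hA.dotProduct_mulVec_nonneg x)

end Tensor


theorem stmt18 (d N : ℕ) (hN : 1 ≤ N) (V : Matrix (Fin d) (Fin d) ℂ)
    (hV : V ∈ Matrix.unitaryGroup (Fin d) ℂ)
    (lam₁ lamd : ℂ) (h₁ : lam₁ ∈ spectrum ℂ V) (h₂ : lamd ∈ spectrum ℂ V)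
    (ρ₁ ρd : Matrix (Fin d) (Fin d) ℂ) (hρ₁ : IsDensityMatrix ρ₁) (hρd : IsDensityMatrix ρd)
    (hP₁ : ρ₁ = eigProj V lam₁ * ρ₁ * eigProj V lam₁)
    (hPd : ρd = eigProj V lamd * ρd * eigProj V lamd)
    (hdiag : ∀ i, ρ₁ i i = ρd i i)
    (p₁ p₂ p₃ : ℝ) (hp₁ : 0 ≤ p₁) (hp₂ : 0 ≤ p₂) (hp₃ : 0 ≤ p₃) (hsum : p₁ + p₂ + p₃ = 1)
    (hzero : (p₁ : ℂ) * lam₁ ^ N + (p₂ : ℂ) * (lam₁ * lamd ^ (N - 1)) + (p₃ : ℂ) * lamd ^ N = 0) :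
    ∀ ρ : Matrix (Fin N → Fin d) (Fin N → Fin d) ℂ,
      ρ = (p₁ : ℂ) • tensorFamily (fun _ : Fin N => ρ₁) +
          (p₂ : ℂ) • tensorFamily (fun k : Fin N => if (k : ℕ) = 0 then ρ₁ else ρd) +
          (p₃ : ℂ) • tensorFamily (fun _ : Fin N => ρd) →
      IsDensityMatrix ρ ∧ (∀ f, (ρ * tensorPow V N) f f = 0) ∧
      diamondNorm (measChannel (tensorPow V N) -
        measChannel (1 : Matrix (Fin N → Fin d) (Fin N → Fin d) ℂ)) = 2 := by
  intro ρ hρdef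
  have hV1 : Vᴴ * V = 1 := by
    have := Matrix.mem_unitaryGroup_iff'.mp hV
    rwa [Matrix.star_eq_conjTranspose] at this
  have hV2 : V * Vᴴ = 1 := by
    have := Matrix.mem_unitaryGroup_iff.mp hV
    rwa [Matrix.star_eq_conjTranspose] at this
  have hρ1V : ρ₁ * V = lam₁ • ρ₁ := rho_mul_eq_smul V hV1 lam₁ ρ₁ hρ₁.2 hP₁
  have hρdV : ρd * V = lamd • ρd := rho_mul_eq_smul V hV1 lamd ρd hρd.2 hPd
  -- density matrix
  have hpsd : ρ.PosSemidef := by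
    rw [hρdef]
    refine Matrix.PosSemidef.add (Matrix.PosSemidef.add ?_ ?_) ?_
    · exact posSemidef_smul_real (tensorFamily_posSemidef _ fun k => hρ₁.1) hp₁
    · refine posSemidef_smul_real (tensorFamily_posSemidef _ fun k => ?_) hp₂
      by_cases h : (k : ℕ) = 0
      · rw [if_pos h]; exact hρ₁.1
      · rw [if_neg h]; exact hρd.1
    · exact posSemidef_smul_real (tensorFamily_posSemidef _ fun k => hρd.1) hp₃
  have htrace : ρ.trace = 1 := by
    rw [hρdef, Matrix.trace_add, Matrix.trace_add, Matrix.trace_smul, Matrix.trace_smul,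
      Matrix.trace_smul, tensorFamily_trace, tensorFamily_trace, tensorFamily_trace]
    have h1 : (∏ k : Fin N, ρ₁.trace) = 1 := by rw [hρ₁.2]; simp
    have h3 : (∏ k : Fin N, ρd.trace) = 1 := by rw [hρd.2]; simp
    have h2 : (∏ k : Fin N, (if (k : ℕ) = 0 then ρ₁ else ρd).trace) = 1 := by
      have : ∀ k : Fin N, (if (k : ℕ) = 0 then ρ₁ else ρd).trace = 1 := by
        intro k
        by_cases h : (k : ℕ) = 0
        · rw [if_pos h, hρ₁.2]
        · rw [if_neg h, hρd.2]
      rw [Finset.prod_congr rfl fun k _ => this k]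
      simp
    rw [h1, h2, h3]
    simp only [smul_eq_mul, mul_one]
    have : ((p₁ + p₂ + p₃ : ℝ) : ℂ) = 1 := by rw [hsum]; norm_num
    push_cast at this
    linear_combination this
  -- vanishing diagonal
  have hdiagρ : ∀ f, (ρ * tensorPow V N) f f = 0 := by
    intro f
    have hTU : ∀ σ : Fin N → Matrix (Fin d) (Fin d) ℂ,
        (tensorFamily σ * tensorPow V N) f f = ∏ k, (σ k * V) (f k) (f k) := by
      intro σ
      rw [tensorPow_eq_tensorFamily, tensorFamily_mul]
      rfl
    rw [hρdef, Matrix.add_mul, Matrix.add_mul, Matrix.smul_mul, Matrix.smul_mul,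
      Matrix.smul_mul]
    simp only [Matrix.add_apply, Matrix.smul_apply, smul_eq_mul]
    rw [hTU, hTU, hTU]
    have hprod1 : (∏ k, ((fun _ : Fin N => ρ₁) k * V) (f k) (f k))
        = lam₁ ^ N * ∏ k, ρ₁ (f k) (f k) := by
      rw [Finset.prod_congr rfl (fun k _ => by rw [hρ1V, Matrix.smul_apply, smul_eq_mul])]
      rw [Finset.prod_mul_distrib, Finset.prod_const, Finset.card_univ, Fintype.card_fin]
    have hprod3 : (∏ k, ((fun _ : Fin N => ρd) k * V) (f k) (f k))
        = lamd ^ N * ∏ k, ρ₁ (f k) (f k) := by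
      rw [Finset.prod_congr rfl (fun k _ => by
        rw [hρdV, Matrix.smul_apply, smul_eq_mul, ← hdiag (f k)])]
      rw [Finset.prod_mul_distrib, Finset.prod_const, Finset.card_univ, Fintype.card_fin]
    have hprod2 : (∏ k, ((fun k : Fin N => if (k : ℕ) = 0 then ρ₁ else ρd) k * V) (f k) (f k))
        = (lam₁ * lamd ^ (N - 1)) * ∏ k, ρ₁ (f k) (f k) := by
      have hterm : ∀ k : Fin N, ((if (k : ℕ) = 0 then ρ₁ else ρd) * V) (f k) (f k)
          = (if (k : ℕ) = 0 then lam₁ else lamd) * ρ₁ (f k) (f k) := by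
        intro k
        by_cases h : (k : ℕ) = 0
        · rw [if_pos h, if_pos h, hρ1V, Matrix.smul_apply, smul_eq_mul]
        · rw [if_neg h, if_neg h, hρdV, Matrix.smul_apply, smul_eq_mul, ← hdiag (f k)]
      rw [Finset.prod_congr rfl fun k _ => hterm k, Finset.prod_mul_distrib]
      congr 1
      set k0 : Fin N := ⟨0, by omega⟩ with hk0
      rw [show (fun k : Fin N => if (k : ℕ) = 0 then lam₁ else lamd)
          = fun k => if k = k0 then lam₁ else lamd from funext fun k => by
        by_cases h : (k : ℕ) = 0
        · rw [if_pos h, if_pos (Fin.ext h : k = k0)]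
        · rw [if_neg h, if_neg (fun hh => h (by rw [hh] : (k : ℕ) = 0))]]
      rw [← Finset.mul_prod_erase Finset.univ _ (Finset.mem_univ k0), if_pos rfl]
      congr 1
      rw [Finset.prod_congr rfl (fun k hk => if_neg (Finset.ne_of_mem_erase hk)),
        Finset.prod_const, Finset.card_erase_of_mem (Finset.mem_univ k0), Finset.card_univ,
        Fintype.card_fin]
    rw [hprod1, hprod2, hprod3]
    linear_combination (∏ k, ρ₁ (f k) (f k)) * hzero
  refine ⟨⟨hpsd, htrace⟩, hdiagρ, ?_⟩
  exact diamondNorm_eq_two (tensorPow V N) (tensorPow_conjT_mul V hV1)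
    (tensorPow_mul_conjT V hV2) ρ ⟨hpsd, htrace⟩ hdiagρ


end Paper
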